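/- Let n ≥ 7 and let y₁, y₂, y₃, y₄ : [0,1] → ℝ be C² functions, smooth on (0,1), satisfying on (0,1) the equation y₁'' - x⁻¹(1+3x²)(1-x²)⁻¹ y₁' + (1/(2n²))[n(y₁')² + ((n-1)y₂'-y₃'-y₄')² + (-y₂'+(n-1)y₃'-y₄')² + (-y₂'-y₃'+(n-1)y₄')² + (n-3)(y₂'+y₃'+y₄')²] = 0, with y₁ real-analytic on (0,1), y₁'(0)=y₁'(1)=0 and y₁(0) < y₁(1). Then y₁'(x) > 0 for all x ∈ (0,1). -/

import Mathlib

open Set Filter Topology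

/-- Monotonicity of `y₁` for the Einstein ODE system. -/
theorem stmt_0 (n : ℕ) (hn : 7 ≤ n) (y₁ y₂ y₃ y₄ : ℝ → ℝ)
    (hC2 : ∀ i ∈ [y₁, y₂, y₃, y₄], ContDiffOn ℝ 2 i (Icc (0:ℝ) 1))
    (hsm : ∀ i ∈ [y₁, y₂, y₃, y₄], ContDiffOn ℝ ⊤ i (Ioo (0:ℝ) 1))
    (hODE : ∀ x ∈ Ioo (0:ℝ) 1,
      deriv (deriv y₁) x - x⁻¹ * (1 + 3*x^2) * (1 - x^2)⁻¹ * deriv y₁ x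
        + (1 / (2*(n:ℝ)^2)) *
          ((n:ℝ) * (deriv y₁ x)^2
            + (((n:ℝ)-1) * deriv y₂ x - deriv y₃ x - deriv y₄ x)^2
            + (-(deriv y₂ x) + ((n:ℝ)-1) * deriv y₃ x - deriv y₄ x)^2
            + (-(deriv y₂ x) - deriv y₃ x + ((n:ℝ)-1) * deriv y₄ x)^2
            + ((n:ℝ)-3) * (deriv y₂ x + deriv y₃ x + deriv y₄ x)^2) = 0)
    (han : AnalyticOn ℝ y₁ (Ioo (0:ℝ) 1))
    (hb0 : deriv y₁ 0 = 0) (hb1 : deriv y₁ 1 = 0)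
    (hlt : y₁ 0 < y₁ 1) :
    ∀ x ∈ Ioo (0:ℝ) 1, 0 < deriv y₁ x := by
  have hopen : IsOpen (Ioo (0:ℝ) 1) := isOpen_Ioo
  have hy₁C2 : ContDiffOn ℝ 2 y₁ (Icc (0:ℝ) 1) := hC2 y₁ (by simp)
  have hy₁sm : ContDiffOn ℝ ⊤ y₁ (Ioo (0:ℝ) 1) := hsm y₁ (by simp)
  have hfsm : ContDiffOn ℝ ⊤ (deriv y₁) (Ioo (0:ℝ) 1) :=
    hy₁sm.deriv_of_isOpen hopen le_top
  have hf_diff : ∀ x ∈ Ioo (0:ℝ) 1, DifferentiableAt ℝ (deriv y₁) x := fun x hx =>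
    (hfsm.contDiffAt (hopen.mem_nhds hx)).differentiableAt (by simp)
  set g : ℝ → ℝ := fun x => (1 - x^2)^2 * x⁻¹ * deriv y₁ x with hgdef
  -- the factor `(1-x²)²/x` is positive on `(0,1)`
  have hμpos : ∀ x ∈ Ioo (0:ℝ) 1, 0 < (1 - x^2)^2 * x⁻¹ := by
    intro x hx
    have h1 : (0:ℝ) < 1 - x^2 := by nlinarith [hx.1, hx.2]
    have h2 : (0:ℝ) < x⁻¹ := inv_pos.2 hx.1
    positivity
  -- differentiability of g and nonpositivity of its derivative
  have both : ∀ x ∈ Ioo (0:ℝ) 1, DifferentiableAt ℝ g x ∧ deriv g x ≤ 0 := by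
    intro x hx
    have hx0 : x ≠ 0 := ne_of_gt hx.1
    have h1xpos : (0:ℝ) < 1 - x^2 := by nlinarith [hx.1, hx.2]
    have h1x : (1:ℝ) - x^2 ≠ 0 := ne_of_gt h1xpos
    have hf' : HasDerivAt (deriv y₁) (deriv (deriv y₁) x) x := (hf_diff x hx).hasDerivAt
    have h1 : HasDerivAt (fun y : ℝ => 1 - y^2) (-(2*x)) x := by
      have := (hasDerivAt_pow 2 x).const_sub 1
      refine this.congr_deriv ?_
      push_cast
      ring
    have h2 : HasDerivAt (fun y : ℝ => (1 - y^2)^2) (2*(1-x^2)*(-(2*x))) x := by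
      have := h1.pow 2
      refine this.congr_deriv ?_
      push_cast
      ring
    have h3 : HasDerivAt (fun y : ℝ => y⁻¹) (-(x^2)⁻¹) x := hasDerivAt_inv hx0
    have hμ : HasDerivAt (fun y : ℝ => (1-y^2)^2 * y⁻¹)
        (2*(1-x^2)*(-(2*x)) * x⁻¹ + (1-x^2)^2 * (-(x^2)⁻¹)) x := h2.mul h3
    have hg : HasDerivAt g
        ((2*(1-x^2)*(-(2*x)) * x⁻¹ + (1-x^2)^2 * (-(x^2)⁻¹)) * deriv y₁ x
          + (1-x^2)^2 * x⁻¹ * deriv (deriv y₁) x) x := hμ.mul hf'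
    refine ⟨hg.differentiableAt, ?_⟩
    have hODE' := hODE x hx
    set Q : ℝ := (1 / (2*(n:ℝ)^2)) *
          ((n:ℝ) * (deriv y₁ x)^2
            + (((n:ℝ)-1) * deriv y₂ x - deriv y₃ x - deriv y₄ x)^2
            + (-(deriv y₂ x) + ((n:ℝ)-1) * deriv y₃ x - deriv y₄ x)^2
            + (-(deriv y₂ x) - deriv y₃ x + ((n:ℝ)-1) * deriv y₄ x)^2
            + ((n:ℝ)-3) * (deriv y₂ x + deriv y₃ x + deriv y₄ x)^2) with hQdef
    have hQ0 : 0 ≤ Q := by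
      rw [hQdef]
      have hn0 : (0:ℝ) ≤ (n:ℝ) := Nat.cast_nonneg n
      have hn3 : (0:ℝ) ≤ (n:ℝ) - 3 := by
        have : (7:ℝ) ≤ (n:ℝ) := by exact_mod_cast hn
        linarith
      refine mul_nonneg (by positivity) ?_
      refine add_nonneg (add_nonneg (add_nonneg (add_nonneg
        (mul_nonneg hn0 (sq_nonneg _)) (sq_nonneg _)) (sq_nonneg _)) (sq_nonneg _))
        (mul_nonneg hn3 (sq_nonneg _))
    have hsec : deriv (deriv y₁) x
        = x⁻¹ * (1 + 3*x^2) * (1 - x^2)⁻¹ * deriv y₁ x - Q := by linarith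
    have hgd : deriv g x = -((1-x^2)^2 * x⁻¹ * Q) := by
      rw [hg.deriv, hsec]
      field_simp
      ring
    rw [hgd]
    have := hμpos x hx
    nlinarith
  -- g is antitone on (0,1)
  have hanti : AntitoneOn g (Ioo (0:ℝ) 1) := by
    refine antitoneOn_of_deriv_nonpos (convex_Ioo 0 1)
      (fun x hx => ((both x hx).1.continuousAt).continuousWithinAt) ?_ ?_
    · intro x hx
      rw [interior_Ioo] at hx
      exact ((both x hx).1).differentiableWithinAt
    · intro x hx
      rw [interior_Ioo] at hx
      exact (both x hx).2
  -- g tends to 0 at 1 from within (0,1)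
  haveI : (𝓝[Ioo (0:ℝ) 1] 1).NeBot := right_nhdsWithin_Ioo_neBot zero_lt_one
  haveI : (𝓝[Ioo (0:ℝ) 1] 0).NeBot := left_nhdsWithin_Ioo_neBot zero_lt_one
  have hhcont : ContinuousOn (derivWithin y₁ (Icc (0:ℝ) 1)) (Icc (0:ℝ) 1) :=
    hy₁C2.continuousOn_derivWithin (uniqueDiffOn_Icc zero_lt_one) one_le_two
  have heq : ∀ x ∈ Ioo (0:ℝ) 1, derivWithin y₁ (Icc (0:ℝ) 1) x = deriv y₁ x := fun x hx =>
    derivWithin_of_mem_nhds (Filter.mem_of_superset (hopen.mem_nhds hx) Ioo_subset_Icc_self)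
  have hμt : Tendsto (fun x : ℝ => (1 - x^2)^2 * x⁻¹) (𝓝[Ioo (0:ℝ) 1] 1) (𝓝 0) := by
    have hc : ContinuousAt (fun x : ℝ => (1 - x^2)^2 * x⁻¹) 1 :=
      ContinuousAt.mul (by fun_prop) (continuousAt_inv₀ one_ne_zero)
    have := hc.continuousWithinAt (s := Ioo (0:ℝ) 1)
    simpa using this.tendsto
  have hht : Tendsto (derivWithin y₁ (Icc (0:ℝ) 1)) (𝓝[Ioo (0:ℝ) 1] 1)
      (𝓝 (derivWithin y₁ (Icc (0:ℝ) 1) 1)) :=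
    (hhcont 1 (right_mem_Icc.2 zero_le_one)).mono Ioo_subset_Icc_self
  have hgt : Tendsto g (𝓝[Ioo (0:ℝ) 1] 1) (𝓝 0) := by
    have := hμt.mul hht
    rw [zero_mul] at this
    refine this.congr' ?_
    filter_upwards [self_mem_nhdsWithin] with y hy
    rw [hgdef]
    simp only
    rw [heq y hy]
  -- g is nonnegative on (0,1)
  have hge0 : ∀ x ∈ Ioo (0:ℝ) 1, 0 ≤ g x := by
    intro x hx
    refine le_of_tendsto hgt ?_
    have h1 : ∀ᶠ y in 𝓝[Ioo (0:ℝ) 1] 1, y ∈ Ioi x :=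
      eventually_nhdsWithin_of_eventually_nhds
        (isOpen_Ioi.eventually_mem hx.2)
    filter_upwards [h1, self_mem_nhdsWithin] with y hy1 hy2
    exact hanti hx hy2 (le_of_lt hy1)
  -- main argument
  intro x hx
  by_contra hcon
  push_neg at hcon
  have hfx0 : deriv y₁ x = 0 := by
    have h1 := hge0 x hx
    have h2 := hμpos x hx
    have : 0 ≤ deriv y₁ x := nonneg_of_mul_nonneg_right h1 h2
    linarith
  have hgx0 : g x = 0 := by rw [hgdef]; simp [hfx0]
  -- deriv y₁ vanishes on (x,1)
  have hzero : ∀ y ∈ Ioo x 1, deriv y₁ y = 0 := by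
    intro y hy
    have hy' : y ∈ Ioo (0:ℝ) 1 := ⟨lt_trans hx.1 hy.1, hy.2⟩
    have h1 : g y ≤ 0 := hgx0 ▸ hanti hx hy' (le_of_lt hy.1)
    have h2 : 0 ≤ g y := hge0 y hy'
    have h3 : g y = 0 := le_antisymm h1 h2
    have h4 := hμpos y hy'
    rw [hgdef] at h3
    simp only at h3
    rcases mul_eq_zero.1 h3 with h | h
    · exact absurd h (ne_of_gt h4)
    · exact h
  -- y₁ is constant on (x,1)
  have hsub : Ioo x 1 ⊆ Ioo (0:ℝ) 1 := Ioo_subset_Ioo (le_of_lt hx.1) le_rfl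
  have hy₁cont : ContinuousOn y₁ (Ioo x 1) := hy₁sm.continuousOn.mono hsub
  have hy₁diff : DifferentiableOn ℝ y₁ (interior (Ioo x 1)) := by
    rw [interior_Ioo]
    intro z hz
    exact ((hy₁sm.contDiffAt (hopen.mem_nhds (hsub hz))).differentiableAt
      (by simp)).differentiableWithinAt
  have hmono : MonotoneOn y₁ (Ioo x 1) := by
    refine monotoneOn_of_deriv_nonneg (convex_Ioo x 1) hy₁cont hy₁diff ?_
    intro z hz
    rw [interior_Ioo] at hz
    rw [hzero z hz]
  have hanti' : AntitoneOn y₁ (Ioo x 1) := by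
    refine antitoneOn_of_deriv_nonpos (convex_Ioo x 1) hy₁cont hy₁diff ?_
    intro z hz
    rw [interior_Ioo] at hz
    rw [hzero z hz]
  have hconst : ∀ a ∈ Ioo x 1, ∀ b ∈ Ioo x 1, y₁ a = y₁ b := by
    intro a ha b hb
    rcases le_total a b with h | h
    · exact le_antisymm (hmono ha hb h) (hanti' ha hb h)
    · exact le_antisymm (hanti' hb ha h) (hmono hb ha h)
  set z : ℝ := (x + 1) / 2 with hzdef
  have hz : z ∈ Ioo x 1 := by constructor <;> [linarith [hx.2]; linarith [hx.2]]
  have hz' : z ∈ Ioo (0:ℝ) 1 := hsub hz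
  set c : ℝ := y₁ z with hcdef
  have hefq : y₁ =ᶠ[𝓝 z] fun _ => c := by
    filter_upwards [isOpen_Ioo.mem_nhds hz] with y hy
    exact hconst y hy z hz
  have hanNhd : AnalyticOnNhd ℝ y₁ (Ioo (0:ℝ) 1) :=
    (hopen.analyticOn_iff_analyticOnNhd).1 han
  have hEq : EqOn y₁ (fun _ => c) (Ioo (0:ℝ) 1) :=
    hanNhd.eqOn_of_preconnected_of_eventuallyEq analyticOnNhd_const isPreconnected_Ioo hz' hefq
  -- limits at the endpoints
  have hy₁c : ContinuousOn y₁ (Icc (0:ℝ) 1) := hy₁C2.continuousOn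
  have end0 : y₁ 0 = c := by
    have t1 : Tendsto y₁ (𝓝[Ioo (0:ℝ) 1] 0) (𝓝 (y₁ 0)) :=
      (hy₁c 0 (left_mem_Icc.2 zero_le_one)).mono Ioo_subset_Icc_self
    have t2 : Tendsto y₁ (𝓝[Ioo (0:ℝ) 1] 0) (𝓝 c) := by
      refine Tendsto.congr' ?_ tendsto_const_nhds
      filter_upwards [self_mem_nhdsWithin] with y hy
      exact (hEq hy).symm
    exact tendsto_nhds_unique t1 t2
  have end1 : y₁ 1 = c := by
    have t1 : Tendsto y₁ (𝓝[Ioo (0:ℝ) 1] 1) (𝓝 (y₁ 1)) :=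
      (hy₁c 1 (right_mem_Icc.2 zero_le_one)).mono Ioo_subset_Icc_self
    have t2 : Tendsto y₁ (𝓝[Ioo (0:ℝ) 1] 1) (𝓝 c) := by
      refine Tendsto.congr' ?_ tendsto_const_nhds
      filter_upwards [self_mem_nhdsWithin] with y hy
      exact (hEq hy).symm
    exact tendsto_nhds_unique t1 t2
  rw [end0, end1] at hlt
  exact lt_irrefl c hlt
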